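/- For the Jacobsthal and Jacobsthal–Lucas numbers and every natural number n ≥ 1, Σ_{i=0}^{n} J(i)²·K(n−i)·J(n−i) = J(n)·( (n−1)·J(n+1) + 2·(n+1)·J(n−1) ) / 9. -/

import Mathlib

noncomputable def jacR : ℕ → ℝ
  | 0 => 0
  | 1 => 1
  | n + 2 => jacR (n + 1) + 2 * jacR n

noncomputable def jacLucR : ℕ → ℝ
  | 0 => 2
  | 1 => 1
  | n + 2 => jacLucR (n + 1) + 2 * jacLucR n

lemma jacR_closed : ∀ k, jacR k = ((2:ℝ)^k - (-1:ℝ)^k) / 3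
  | 0 => by norm_num [jacR]
  | 1 => by norm_num [jacR]
  | n + 2 => by
      rw [jacR, jacR_closed (n+1), jacR_closed n]
      ring

lemma jacLucR_closed : ∀ k, jacLucR k = (2:ℝ)^k + (-1:ℝ)^k
  | 0 => by norm_num [jacLucR]
  | 1 => by norm_num [jacLucR]
  | n + 2 => by
      rw [jacLucR, jacLucR_closed (n+1), jacLucR_closed n]
      ring

lemma neg_one_sq_pow (k : ℕ) : ((-1:ℝ)^k)^2 = 1 := by
  rw [← pow_mul, mul_comm, pow_mul]; norm_num

lemma four_pow (k : ℕ) : (4:ℝ)^k = ((2:ℝ)^k)^2 := by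
  rw [← pow_mul, mul_comm, pow_mul]; norm_num

lemma neg_two_pow (k : ℕ) : (-2:ℝ)^k = (2:ℝ)^k * (-1:ℝ)^k := by
  rw [← mul_pow]; norm_num

lemma prodJK (m : ℕ) : jacLucR m * jacR m = ((4:ℝ)^m - 1) / 3 := by
  rw [jacR_closed, jacLucR_closed, four_pow]
  linear_combination (-1/3 : ℝ) * neg_one_sq_pow m

lemma jacRsq (k : ℕ) : jacR k ^ 2 = ((4:ℝ)^k - 2 * (-2:ℝ)^k + 1) / 9 := by
  rw [jacR_closed, four_pow, neg_two_pow]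
  linear_combination (1/9 : ℝ) * neg_one_sq_pow k

lemma sumJsq (n : ℕ) : ∑ i ∈ Finset.range (n + 1), jacR i ^ 2 =
    ((4:ℝ)^(n+1) - 1) / 27 - 2 * (1 - (-2:ℝ)^(n+1)) / 27 + ((n:ℝ) + 1) / 9 := by
  induction n with
  | zero => simp [jacR]; norm_num
  | succ n ih =>
      rw [Finset.sum_range_succ, ih, jacRsq]
      push_cast
      ring

lemma sumS (n : ℕ) : ∑ i ∈ Finset.range (n + 1), jacR i ^ 2 * (((4:ℝ)^(n-i) - 1) / 3) =
    ((n:ℝ) + 1) * ((4:ℝ)^n - 1) / 27 + (2 - 4 * (4:ℝ)^n + 2 * (-2:ℝ)^n) / 81 := by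
  induction n with
  | zero => simp [jacR]; norm_num
  | succ n ih =>
      rw [Finset.sum_range_succ]
      have hc : ∀ i ∈ Finset.range (n + 1),
          jacR i ^ 2 * (((4:ℝ)^(n+1-i) - 1) / 3) =
          4 * (jacR i ^ 2 * (((4:ℝ)^(n-i) - 1) / 3)) + jacR i ^ 2 := by
        intro i hi
        rw [Finset.mem_range] at hi
        have h : n + 1 - i = (n - i) + 1 := by omega
        rw [h, pow_succ]
        ring
      rw [Finset.sum_congr rfl hc, Finset.sum_add_distrib, ← Finset.mul_sum, ih, sumJsq]
      simp only [Nat.sub_self, pow_zero]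
      push_cast
      ring

theorem jacobsthal_product_convolution (n : ℕ) (hn : 1 ≤ n) :
    ∑ i ∈ Finset.range (n + 1), jacR i ^ 2 * jacLucR (n - i) * jacR (n - i) =
      jacR n * (((n : ℝ) - 1) * jacR (n + 1) + 2 * ((n : ℝ) + 1) * jacR (n - 1)) / 9 := by
  obtain ⟨m, rfl⟩ : ∃ m, n = m + 1 := ⟨n - 1, by omega⟩
  have hc : ∀ i ∈ Finset.range (m + 1 + 1),
      jacR i ^ 2 * jacLucR (m + 1 - i) * jacR (m + 1 - i) =
      jacR i ^ 2 * (((4:ℝ)^(m+1-i) - 1) / 3) := by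
    intro i _
    rw [mul_assoc, prodJK]
  rw [Finset.sum_congr rfl hc, sumS]
  have hm : m + 1 - 1 = m := by omega
  rw [hm, jacR_closed (m+1), jacR_closed (m+2), jacR_closed m]
  simp only [pow_succ, four_pow, neg_two_pow]
  push_cast
  linear_combination (((3:ℝ) * m + 4) / 81) * neg_one_sq_pow m
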